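/- Let n ≥ 1 and let N be a norm on M_n. Define norms on ℂⁿ by ‖x‖₁ = max{N(C_{Ax}) : A ∈ M_n, N(A) = 1} and ‖x‖₂ = N(C_x). Then for every A ∈ M_n and x ∈ ℂⁿ one has ‖Ax‖₂ ≤ N(A)·‖x‖₁; consequently the generalized induced norm satisfies ‖A‖_{1,2} = max{‖Ax‖₂ : ‖x‖₁ = 1} ≤ N(A) for all A ∈ M_n. -/

import Mathlib

open Matrix

/-- `ν` is a norm on `ℂⁿ`. -/
def IsNormCn {n : ℕ} (ν : (Fin n → ℂ) → ℝ) : Prop :=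
  (∀ x, ν x = 0 ↔ x = 0) ∧
  (∀ (c : ℂ) (x), ν (c • x) = ‖c‖ * ν x) ∧
  (∀ x y, ν (x + y) ≤ ν x + ν y)

/-- `N` is a norm on the n×n complex matrices. -/
def IsNormMn {n : ℕ} (N : Matrix (Fin n) (Fin n) ℂ → ℝ) : Prop :=
  (∀ A, N A = 0 ↔ A = 0) ∧
  (∀ (c : ℂ) (A), N (c • A) = ‖c‖ * N A) ∧
  (∀ A B, N (A + B) ≤ N A + N B)

/-- `N` is a minimal norm on `M_n`: any norm dominated by `N` equals `N`. -/
def IsMinimalNorm {n : ℕ} (N : Matrix (Fin n) (Fin n) ℂ → ℝ) : Prop :=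
  ∀ N' : Matrix (Fin n) (Fin n) ℂ → ℝ,
    IsNormMn N' → (∀ A, N' A ≤ N A) → ∀ A, N' A = N A

/-- The generalized induced norm `‖A‖_{1,2} = max{‖Ax‖₂ : ‖x‖₁ = 1}`. -/
noncomputable def gind {n : ℕ} (ν₁ ν₂ : (Fin n → ℂ) → ℝ)
    (A : Matrix (Fin n) (Fin n) ℂ) : ℝ :=
  sSup {r : ℝ | ∃ x : Fin n → ℂ, ν₁ x = 1 ∧ r = ν₂ (A.mulVec x)}

/-- `C_x`: the matrix all of whose columns equal `x`, i.e. `y ↦ (∑ j, y j) • x`. -/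
def Cmat {n : ℕ} (x : Fin n → ℂ) : Matrix (Fin n) (Fin n) ℂ :=
  Matrix.of fun i _ => x i

/-! ### Auxiliary lemmas -/

lemma aux_N_zero {n : ℕ} {N : Matrix (Fin n) (Fin n) ℂ → ℝ} (hN : IsNormMn N) :
    N 0 = 0 := (hN.1 0).2 rfl

lemma aux_N_nonneg {n : ℕ} {N : Matrix (Fin n) (Fin n) ℂ → ℝ} (hN : IsNormMn N)
    (A : Matrix (Fin n) (Fin n) ℂ) : 0 ≤ N A := by
  have h1 : N ((-1 : ℂ) • A) = N A := by rw [hN.2.1]; simp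
  have h2 := hN.2.2 A ((-1 : ℂ) • A)
  have h3 : A + (-1 : ℂ) • A = 0 := by simp
  rw [h3, aux_N_zero hN, h1] at h2
  linarith

lemma aux_N_sum_le {n : ℕ} {N : Matrix (Fin n) (Fin n) ℂ → ℝ} (hN : IsNormMn N)
    {ι : Type*} (s : Finset ι) (f : ι → Matrix (Fin n) (Fin n) ℂ) :
    N (∑ i ∈ s, f i) ≤ ∑ i ∈ s, N (f i) := by
  classical
  induction s using Finset.cons_induction with
  | empty => simp [aux_N_zero hN]
  | cons a s ha ih =>
    rw [Finset.sum_cons, Finset.sum_cons]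
    exact le_trans (hN.2.2 _ _) (by linarith)

/-- Type synonym for `Matrix (Fin n) (Fin n) ℂ` carrying no topology. -/
def MSyn (n : ℕ) : Type := Matrix (Fin n) (Fin n) ℂ

instance {n : ℕ} : AddCommGroup (MSyn n) :=
  inferInstanceAs (AddCommGroup (Matrix (Fin n) (Fin n) ℂ))

noncomputable instance {n : ℕ} : Module ℂ (MSyn n) :=
  inferInstanceAs (Module ℂ (Matrix (Fin n) (Fin n) ℂ))

instance {n : ℕ} : FiniteDimensional ℂ (MSyn n) :=
  inferInstanceAs (Module.Finite ℂ (Matrix (Fin n) (Fin n) ℂ))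

/-- The key finite-dimensionality fact: entries are bounded by a multiple of `N`. -/
lemma aux_entry_bound {n : ℕ} {N : Matrix (Fin n) (Fin n) ℂ → ℝ} (hN : IsNormMn N) :
    ∃ c : ℝ, ∀ (B : Matrix (Fin n) (Fin n) ℂ) (i j : Fin n), ‖B i j‖ ≤ c * N B := by
  letI : NormedAddCommGroup (MSyn n) :=
    AddGroupNorm.toNormedAddCommGroup
      { toFun := fun B => N B
        map_zero' := aux_N_zero hN
        add_le' := hN.2.2
        neg' := fun A => by
          have h1 : ∀ A' : Matrix (Fin n) (Fin n) ℂ, N (-A') = N A' := fun A' => by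
            rw [← neg_one_smul ℂ A', hN.2.1]; simp
          exact h1 A
        eq_zero_of_map_eq_zero' := fun A hA => (hN.1 A).1 hA }
  letI : NormedSpace ℂ (MSyn n) :=
    ⟨fun c A => le_of_eq (hN.2.1 c A)⟩
  let f : MSyn n →ₗ[ℂ] (Fin n → Fin n → ℂ) :=
    { toFun := fun B i j => (B : Matrix (Fin n) (Fin n) ℂ) i j
      map_add' := fun _ _ => rfl
      map_smul' := fun _ _ => rfl }
  have hf : Continuous f := f.continuous_of_finiteDimensional
  let g : MSyn n →L[ℂ] (Fin n → Fin n → ℂ) := ⟨f, hf⟩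
  obtain ⟨C, -, hC⟩ := g.bound
  refine ⟨C, fun B i j => ?_⟩
  have h1 : ‖B i j‖ ≤ ‖g (B : MSyn n)‖ :=
    le_trans (norm_le_pi_norm (g (B : MSyn n) i) j) (norm_le_pi_norm (g (B : MSyn n)) i)
  exact le_trans h1 (hC (B : MSyn n))

lemma aux_Cmat_mulVec {n : ℕ} (A : Matrix (Fin n) (Fin n) ℂ) (x : Fin n → ℂ) :
    Cmat (A.mulVec x) = A * Cmat x := by
  ext i k
  simp [Cmat, Matrix.mul_apply, Matrix.mulVec, dotProduct]

lemma aux_Cmat_smul {n : ℕ} (c : ℂ) (x : Fin n → ℂ) :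
    Cmat (c • x) = c • Cmat x := by
  ext i k
  simp [Cmat]

/-- Uniform bound for `N (B * Cmat x)` over the unit sphere of `N`. -/
lemma aux_sphere_bound {n : ℕ} {N : Matrix (Fin n) (Fin n) ℂ → ℝ} (hN : IsNormMn N)
    (x : Fin n → ℂ) :
    ∃ M : ℝ, ∀ B : Matrix (Fin n) (Fin n) ℂ, N B = 1 → N (B * Cmat x) ≤ M := by
  obtain ⟨c, hc⟩ := aux_entry_bound hN
  refine ⟨∑ i : Fin n, ∑ j : Fin n, c * N (Matrix.single i j (1 : ℂ) * Cmat x),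
    fun B hB => ?_⟩
  have hdecomp : B * Cmat x =
      ∑ i : Fin n, ∑ j : Fin n, B i j • (Matrix.single i j (1 : ℂ) * Cmat x) := by
    conv_lhs => rw [matrix_eq_sum_single B]
    rw [Finset.sum_mul]
    refine Finset.sum_congr rfl fun i _ => ?_
    rw [Finset.sum_mul]
    refine Finset.sum_congr rfl fun j _ => ?_
    rw [← smul_mul_assoc, smul_single, smul_eq_mul, mul_one]
  rw [hdecomp]
  refine le_trans (aux_N_sum_le hN _ _) (Finset.sum_le_sum fun i _ => ?_)
  refine le_trans (aux_N_sum_le hN _ _) (Finset.sum_le_sum fun j _ => ?_)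
  rw [hN.2.1]
  have h1 : ‖B i j‖ ≤ c := by simpa [hB] using hc B i j
  exact mul_le_mul_of_nonneg_right h1 (aux_N_nonneg hN _)

theorem gind_le_of_minimal_construction (n : ℕ) (hn : 1 ≤ n)
    (N : Matrix (Fin n) (Fin n) ℂ → ℝ) (hN : IsNormMn N)
    (ν₁ ν₂ : (Fin n → ℂ) → ℝ)
    (hν₁ : ∀ x, ν₁ x = sSup {r : ℝ | ∃ A : Matrix (Fin n) (Fin n) ℂ,
        N A = 1 ∧ r = N (Cmat (A.mulVec x))})
    (hν₂ : ∀ x, ν₂ x = N (Cmat x)) :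
    (∀ (A : Matrix (Fin n) (Fin n) ℂ) (x : Fin n → ℂ),
        ν₂ (A.mulVec x) ≤ N A * ν₁ x) ∧
      ∀ A : Matrix (Fin n) (Fin n) ℂ, gind ν₁ ν₂ A ≤ N A := by
  have key : ∀ (A : Matrix (Fin n) (Fin n) ℂ) (x : Fin n → ℂ),
      ν₂ (A.mulVec x) ≤ N A * ν₁ x := by
    intro A x
    rcases eq_or_lt_of_le (aux_N_nonneg hN A) with h0 | h0
    · -- N A = 0, so A = 0
      have hA : A = 0 := (hN.1 A).1 h0.symm
      subst hA
      have : (0 : Matrix (Fin n) (Fin n) ℂ).mulVec x = 0 := by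
        simp [Matrix.mulVec]
      rw [hν₂, this]
      have hC0 : Cmat (0 : Fin n → ℂ) = 0 := by ext i k; simp [Cmat]
      rw [hC0, aux_N_zero hN]
      simp [← h0]
    · -- N A > 0
      set B : Matrix (Fin n) (Fin n) ℂ := ((N A : ℂ))⁻¹ • A with hBdef
      have hnormc : ‖((N A : ℂ))⁻¹‖ = (N A)⁻¹ := by
        rw [norm_inv, Complex.norm_real, Real.norm_eq_abs, abs_of_pos h0]
      have hNB : N B = 1 := by
        rw [hBdef, hN.2.1, hnormc, inv_mul_cancel₀ (ne_of_gt h0)]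
      have hBx : N (Cmat (B.mulVec x)) = (N A)⁻¹ * N (Cmat (A.mulVec x)) := by
        rw [hBdef, Matrix.smul_mulVec, aux_Cmat_smul, hN.2.1, hnormc]
      obtain ⟨M, hM⟩ := aux_sphere_bound hN x
      have hbdd : BddAbove {r : ℝ | ∃ A : Matrix (Fin n) (Fin n) ℂ,
          N A = 1 ∧ r = N (Cmat (A.mulVec x))} := by
        refine ⟨M, fun r hr => ?_⟩
        obtain ⟨B', hB', rfl⟩ := hr
        rw [aux_Cmat_mulVec]
        exact hM B' hB'
      have hmem : (N A)⁻¹ * N (Cmat (A.mulVec x)) ∈ {r : ℝ | ∃ A : Matrix (Fin n) (Fin n) ℂ,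
          N A = 1 ∧ r = N (Cmat (A.mulVec x))} := ⟨B, hNB, hBx.symm⟩
      have hle := le_csSup hbdd hmem
      rw [← hν₁ x] at hle
      rw [hν₂]
      calc N (Cmat (A.mulVec x)) = N A * ((N A)⁻¹ * N (Cmat (A.mulVec x))) := by
            field_simp
        _ ≤ N A * ν₁ x := mul_le_mul_of_nonneg_left hle (le_of_lt h0)
  refine ⟨key, fun A => ?_⟩
  apply Real.sSup_le
  · rintro r ⟨x, hx, rfl⟩
    have := key A x
    rwa [hx, mul_one] at this
  · exact aux_N_nonneg hN A
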